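/- The rank frequency embedding T_RF does not preserve the probabilistic Schulze rule: there exist two profiles with equal rank frequency matrices whose probabilistic Schulze lotteries differ. -/

import Mathlib

/-!
Framework: candidates are `Fin m`.  A ballot is a strict linear order on the
candidates, represented by its (0-indexed) rank function, a bijection
`Fin m ≃ Fin m` sending each candidate to its position.  A profile is a finite
list of ballots (one per voter).  A lottery on the candidates is represented by
its probability mass function `Fin m → ℚ`, and a probabilistic social choice
function (PSCF) maps profiles to lotteries.
-/

/-- A ballot: each candidate is assigned a distinct (0-indexed) rank;
rank `0` is the most preferred position. -/
abbrev Ballot (m : ℕ) := Fin m ≃ Fin m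

/-- A profile is a finite list of ballots, one per voter. -/
abbrev Profile (m : ℕ) := List (Ballot m)

/-- `wt X a b` is the number of voters in `X` who strictly prefer `a` to `b`
(i.e. rank `a` above `b`). -/
def wt {m : ℕ} (X : Profile m) (a b : Fin m) : ℕ :=
  X.countP (fun x => decide (x a < x b))

/-- The uniform lottery over a finite set `W` of candidates
(probability `1/|W|` on members of `W`, probability `0` elsewhere). -/
def unif {m : ℕ} (W : Finset (Fin m)) : Fin m → ℚ :=
  fun c => if c ∈ W then ((W.card : ℚ))⁻¹ else 0

/-- The set of candidates attaining the maximum value of the score `s`. -/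
def argmaxSet {m : ℕ} {α : Type*} [LinearOrder α] (s : Fin m → α) : Finset (Fin m) :=
  Finset.univ.filter (fun c => ∀ d, s d ≤ s c)

/-- The set of candidates attaining the minimum value of the score `s`. -/
def argminSet {m : ℕ} {α : Type*} [LinearOrder α] (s : Fin m → α) : Finset (Fin m) :=
  Finset.univ.filter (fun c => ∀ d, s c ≤ s d)

/-- An embedding `T` preserves a PSCF `f` if there exists `f'` with
`f' (T X) = f X` for all profiles `X`. -/
def Preserves {m : ℕ} {X' : Type*} (T : Profile m → X') (f : Profile m → Fin m → ℚ) : Prop :=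
  ∃ f' : X' → Fin m → ℚ, ∀ X : Profile m, f' (T X) = f X

/-- Weighted tournament embedding: `(T_WT X) j k = |{voters i : j ≻ᵢ k}|`. -/
def T_WT {m : ℕ} (X : Profile m) : Fin m → Fin m → ℕ :=
  fun a b => wt X a b

/-- Tournament embedding: entry `1` if a strict majority prefers `j` to `k`,
`0` if a strict majority prefers `k` to `j`, and `1/2` on ties. -/
def T_T {m : ℕ} (X : Profile m) : Fin m → Fin m → ℚ :=
  fun a b =>
    if wt X b a < wt X a b then 1
    else if wt X a b < wt X b a then 0
    else 1/2

/-- Rank frequency embedding: `(T_RF X) c k` is the number of voters ranking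
candidate `c` in position `k`. -/
def T_RF {m : ℕ} (X : Profile m) : Fin m → Fin m → ℕ :=
  fun c k => X.countP (fun x => decide (x c = k))

/-- Plurality score of `c`: the number of voters ranking `c` first. -/
def pluralityScore {m : ℕ} (X : Profile m) (c : Fin m) : ℕ :=
  X.countP (fun x => decide ((x c : ℕ) = 0))

/-- Probabilistic Plurality rule: the uniform lottery over the candidates with
maximum plurality score. -/
def plurality {m : ℕ} (X : Profile m) : Fin m → ℚ :=
  unif (argmaxSet (pluralityScore X))

/-- Borda score of `c`: `Σ_i (m − x_i(c))` where `x_i(c) ∈ {1,…,m}` is the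
(1-indexed) rank of `c` on voter `i`'s ballot. -/
def bordaScore {m : ℕ} (X : Profile m) (c : Fin m) : ℕ :=
  (X.map (fun x => m - ((x c : ℕ) + 1))).sum

/-- Probabilistic Borda rule: the uniform lottery over the candidates with
maximum Borda score. -/
def borda {m : ℕ} (X : Profile m) : Fin m → ℚ :=
  unif (argmaxSet (bordaScore X))

/-- Copeland score of `c`: `1` for every other candidate beaten by `c` in a
strict pairwise majority and `1/2` for every pairwise tie. -/
def copelandScore {m : ℕ} (X : Profile m) (c : Fin m) : ℚ :=
  ∑ b ∈ Finset.univ.filter (fun b => b ≠ c),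
    (if wt X b c < wt X c b then 1 else if wt X c b < wt X b c then 0 else 1/2)

/-- Probabilistic Copeland rule: the uniform lottery over the candidates with
maximum Copeland score. -/
def copeland {m : ℕ} (X : Profile m) : Fin m → ℚ :=
  unif (argmaxSet (copelandScore X))

/-- `max_{b ≠ c} d(b,c)`: the maximum weight of an incoming pairwise defeat. -/
def maxIncoming {m : ℕ} (X : Profile m) (c : Fin m) : ℕ :=
  (Finset.univ.filter (fun b => b ≠ c)).sup (fun b => wt X b c)

/-- Probabilistic Simpson-Kramer (Maximin) rule: the uniform lottery over the
candidates minimizing `max_{b ≠ c} d(b,c)`. -/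
def simpsonKramer {m : ℕ} (X : Profile m) : Fin m → ℚ :=
  unif (argminSet (maxIncoming X))

/-- `a` beats `b` by a strict pairwise majority in `X`. -/
def Beats {m : ℕ} (X : Profile m) (a b : Fin m) : Prop :=
  wt X b a < wt X a b

/-- `l` is (the vertex list of) a directed path from `a` to `b` in the majority
graph `G_X`: consecutive vertices are majority defeats. -/
def IsMajPath {m : ℕ} (X : Profile m) (a b : Fin m) (l : List (Fin m)) : Prop :=
  2 ≤ l.length ∧ l.head? = some a ∧ l.getLast? = some b ∧ l.Chain' (Beats X)

/-- Strength of a path: the minimum weight `d(u,v)` over its consecutive edges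
(the initial value `X.length` is an upper bound for all edge weights, so it does
not affect the minimum for an actual path). -/
def pathStrength {m : ℕ} (X : Profile m) (l : List (Fin m)) : ℕ :=
  ((l.zip l.tail).map (fun e => wt X e.1 e.2)).foldr min X.length

/-- Schulze strength `p(a,b)`: the maximum strength of a directed path from
`a` to `b` in `G_X`, and `0` if there is no such path. -/
noncomputable def schulzeP {m : ℕ} (X : Profile m) (a b : Fin m) : ℕ :=
  sSup {s | ∃ l, IsMajPath X a b l ∧ pathStrength X l = s}

open Classical in
/-- Schulze winners: `W(X) = {a : p(a,b) ≥ p(b,a) for all b}`. -/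
noncomputable def schulzeWinners {m : ℕ} (X : Profile m) : Finset (Fin m) :=
  Finset.univ.filter (fun a => ∀ b, schulzeP X b a ≤ schulzeP X a b)

/-- Probabilistic Schulze rule: the uniform lottery over the Schulze winners. -/
noncomputable def schulze {m : ℕ} (X : Profile m) : Fin m → ℚ :=
  unif (schulzeWinners X)

/-- Plurality score of `c` among the remaining candidates `S`: the number of
voters whose most preferred candidate within `S` is `c`. -/
def irvScore {m : ℕ} (X : Profile m) (S : Finset (Fin m)) (c : Fin m) : ℕ :=
  X.countP (fun x => decide (c ∈ S ∧ ∀ d ∈ S, x c ≤ x d))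

/-- One round of IRV: eliminate from `S` the candidate with the lowest
plurality score among `S`, breaking ties by the fixed (lexicographic) order on
`Fin m` (i.e. the least such candidate is eliminated). -/
def irvStep {m : ℕ} (X : Profile m) (S : Finset (Fin m)) : Finset (Fin m) :=
  S.filter (fun c => ¬ ((∀ d ∈ S, irvScore X S c ≤ irvScore X S d) ∧
    ∀ d ∈ S, (∀ e ∈ S, irvScore X S d ≤ irvScore X S e) → c ≤ d))

/-- The candidates surviving all `m - 1` IRV elimination rounds. -/
def irvWinners {m : ℕ} (X : Profile m) : Finset (Fin m) :=
  (irvStep X)^[m - 1] Finset.univ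

/-- Probabilistic IRV: all probability mass on the candidate never
eliminated. -/
def irv {m : ℕ} (X : Profile m) : Fin m → ℚ :=
  unif (irvWinners X)

/-- `c` is a Condorcet winner: it beats every other candidate by a strict
pairwise majority. -/
def IsCondorcetWinner {m : ℕ} (X : Profile m) (c : Fin m) : Prop :=
  ∀ b, b ≠ c → wt X b c < wt X c b

/-- Winners of Black's rule: the Condorcet winner if one exists, otherwise the
candidates with maximum Borda score. -/
def blackWinners {m : ℕ} (X : Profile m) : Finset (Fin m) :=
  let cw := Finset.univ.filter (fun c => ∀ b, b ≠ c → wt X b c < wt X c b)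
  if cw.Nonempty then cw else argmaxSet (bordaScore X)

/-- Probabilistic Black's rule. -/
def black {m : ℕ} (X : Profile m) : Fin m → ℚ :=
  unif (blackWinners X)

/-- Probabilistic positional scoring rule for a score vector `s` (indexed by
position): candidate `c` gets total score `Σ_i s (x_i c)`, and the rule returns
the uniform lottery over the candidates of maximum total score. -/
noncomputable def scoringRule {m : ℕ} (s : Fin m → ℝ) (X : Profile m) : Fin m → ℚ :=
  unif (argmaxSet (fun c => (X.map (fun x => s (x c))).sum))


section SchulzeAux

private lemma foldr_min_le' {l : List ℕ} {b : ℕ} : l.foldr min b ≤ b := by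
  induction l with
  | nil => exact le_rfl
  | cons a t ih => exact le_trans (min_le_right _ _) ih

private lemma last_edge' {α : Type*} {R : α → α → Prop} :
    ∀ (t : List α) (x y c : α), (x::y::t).getLast? = some c →
      List.Chain' R (x::y::t) → ∃ u, R u c := by
  intro t
  induction t with
  | nil =>
    intro x y c hl hc
    simp [List.getLast?] at hl
    subst hl
    exact ⟨x, (List.isChain_cons_cons.mp hc).1⟩
  | cons z t ih =>
    intro x y c hl hc
    exact ih y z c (by simpa using hl) (List.isChain_cons_cons.mp hc).2

private lemma schulzeP_eq_zero' {m : ℕ} {X : Profile m} {c : Fin m}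
    (h : ∀ u, ¬ Beats X u c) (b : Fin m) : schulzeP X b c = 0 := by
  have hset : {s | ∃ l, IsMajPath X b c l ∧ pathStrength X l = s} = ∅ := by
    ext s
    simp only [Set.mem_setOf_eq, Set.mem_empty_iff_false, iff_false, not_exists]
    rintro l ⟨⟨hlen, _, hlast, hchain⟩, _⟩
    match l, hlen with
    | x :: y :: t, _ =>
      obtain ⟨u, hu⟩ := last_edge' t x y c hlast hchain
      exact h u hu
  rw [schulzeP, hset, csSup_empty]; rfl

private lemma bddAbove_strengths' {m : ℕ} (X : Profile m) (a b : Fin m) :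
    BddAbove {s | ∃ l, IsMajPath X a b l ∧ pathStrength X l = s} := by
  refine ⟨X.length, ?_⟩
  rintro s ⟨l, _, rfl⟩
  exact foldr_min_le'

private lemma schulzeP_pos' {m : ℕ} {X : Profile m} {c b : Fin m}
    (h : Beats X c b) : 0 < schulzeP X c b := by
  have hwt : 0 < wt X c b := lt_of_le_of_lt (Nat.zero_le _) h
  have hlen : wt X c b ≤ X.length := List.countP_le_length
  have hmem : min (wt X c b) X.length ∈
      {s | ∃ l, IsMajPath X c b l ∧ pathStrength X l = s} := by
    refine ⟨[c, b], ⟨by simp, rfl, rfl, ?_⟩, rfl⟩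
    exact List.isChain_pair.mpr h
  have hle := le_csSup (bddAbove_strengths' X c b) hmem
  have hpos : 0 < min (wt X c b) X.length := lt_min hwt (lt_of_lt_of_le hwt hlen)
  exact lt_of_lt_of_le hpos hle

private lemma winners_eq' {m : ℕ} (X : Profile m) (c : Fin m)
    (h : ∀ b, b ≠ c → wt X b c < wt X c b) : schulzeWinners X = {c} := by
  have hnb : ∀ u, ¬ Beats X u c := by
    intro u hu
    by_cases huc : u = c
    · subst huc; exact lt_irrefl _ hu
    · exact absurd hu (not_lt.mpr (le_of_lt (h u huc)))
  ext a
  simp only [schulzeWinners, Finset.mem_filter, Finset.mem_univ, true_and,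
    Finset.mem_singleton]
  constructor
  · intro ha
    by_contra hac
    have h1 : 0 < schulzeP X c a := schulzeP_pos' (h a hac)
    have h2 : schulzeP X a c = 0 := schulzeP_eq_zero' hnb a
    have h3 := ha c
    omega
  · rintro rfl
    intro b
    simp [schulzeP_eq_zero' hnb b]

private def bal' (v w : Fin 3 → Fin 3) (h1 : Function.LeftInverse w v := by decide)
    (h2 : Function.RightInverse w v := by decide) : Ballot 3 := ⟨v, w, h1, h2⟩

private def bABC : Ballot 3 := bal' ![0,1,2] ![0,1,2]
private def bBCA : Ballot 3 := bal' ![1,2,0] ![2,0,1]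
private def bCAB : Ballot 3 := bal' ![2,0,1] ![1,2,0]
private def bCBA : Ballot 3 := bal' ![2,1,0] ![2,1,0]
private def bACB : Ballot 3 := bal' ![0,2,1] ![0,2,1]
private def bBAC : Ballot 3 := bal' ![1,0,2] ![1,0,2]

private def Xpr : Profile 3 := [bABC, bBCA, bCAB, bCAB, bCBA]
private def Ypr : Profile 3 := [bACB, bBAC, bCAB, bCBA, bCBA]

end SchulzeAux

/-- The rank frequency embedding does not preserve the probabilistic
Schulze rule: there exist two profiles with equal rank frequency matrices whose
probabilistic Schulze lotteries differ. -/
theorem trf_not_preserves_schulze :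
    ∃ m : ℕ, ¬ Preserves (T_RF (m := m)) schulze ∧
      ∃ X Y : Profile m, T_RF X = T_RF Y ∧ schulze X ≠ schulze Y := by
  have hX : schulzeWinners Xpr = {1} := winners_eq' _ _ (by decide)
  have hY : schulzeWinners Ypr = {2} := winners_eq' _ _ (by decide)
  have hRF : T_RF Xpr = T_RF Ypr := by
    funext c k; fin_cases c <;> fin_cases k <;> rfl
  have hne : schulze Xpr ≠ schulze Ypr := by
    intro h
    have h1 := congrFun h 1
    rw [schulze, schulze, hX, hY] at h1
    simp [unif] at h1
  exact ⟨3, fun ⟨f', hf⟩ => hne ((hf Xpr).symm.trans ((congrArg f' hRF).trans (hf Ypr))),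
    Xpr, Ypr, hRF, hne⟩
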